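/- Let R be a 2-torsion free σ-prime ring and U a nonzero σ-Lie ideal of R. If [U,U] = 0, then U ⊆ Z(R). -/
import Mathlib


theorem stmt4 (R : Type*) [Ring R]
  (σ : R → R)
  (hσadd : ∀ x y : R, σ (x + y) = σ x + σ y)
  (hσmul : ∀ x y : R, σ (x * y) = σ y * σ x)
  (hσinv : ∀ x : R, σ (σ x) = x)
  (htor : ∀ x : R, x + x = 0 → x = 0)
  (hsp : ∀ a b : R, (∀ r : R, a * r * b = 0) → (∀ r : R, a * r * σ b = 0) → a = 0 ∨ b = 0)
  (U : AddSubgroup R)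
  (hLie : ∀ u ∈ U, ∀ r : R, u * r - r * u ∈ U)
  (hσU : ∀ u ∈ U, σ u ∈ U)
  (hUnz : ∃ u ∈ U, u ≠ (0 : R))
  (hcomm : ∀ u ∈ U, ∀ v ∈ U, u * v - v * u = 0) :
    (∀ u ∈ U, ∀ r : R, u * r = r * u) := by
  -- σ 0 = 0 and σ (-x) = -σ x
  have hσ0 : σ (0 : R) = 0 := by
    have h := hσadd 0 0
    rw [add_zero] at h
    exact (left_eq_add.mp h)
  have hσneg : ∀ x : R, σ (-x) = -σ x := by
    intro x
    have h : σ x + σ (-x) = 0 := by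
      have h := hσadd x (-x)
      rw [add_neg_cancel, hσ0] at h
      exact h.symm
    exact (neg_eq_of_add_eq_zero_right h).symm
  -- key1 : [w,r] * [w,s] = 0 for w ∈ U
  have key1 : ∀ w ∈ U, ∀ r s : R, (w*r - r*w) * (w*s - s*w) = 0 := by
    intro w hw r s
    have h1 : w * (w*(r*s) - (r*s)*w) - (w*(r*s) - (r*s)*w) * w = 0 :=
      hcomm w hw _ (hLie w hw (r*s))
    have h2 : w * (w*r - r*w) - (w*r - r*w) * w = 0 :=
      hcomm w hw _ (hLie w hw r)
    have h3 : w * (w*s - s*w) - (w*s - s*w) * w = 0 :=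
      hcomm w hw _ (hLie w hw s)
    apply htor
    have expand : (w*r - r*w) * (w*s - s*w) + (w*r - r*w) * (w*s - s*w)
        = (w * (w*(r*s) - (r*s)*w) - (w*(r*s) - (r*s)*w) * w)
          - (w * (w*r - r*w) - (w*r - r*w) * w) * s
          - r * (w * (w*s - s*w) - (w*s - s*w) * w) := by noncomm_ring
    rw [h1, h2, h3] at expand
    simpa using expand
  -- key2 : [w,r] * t * [w,s] = 0 for w ∈ U
  have key2 : ∀ w ∈ U, ∀ r t s : R, (w*r - r*w) * t * (w*s - s*w) = 0 := by
    intro w hw r t s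
    have expand : (w*r - r*w) * t * (w*s - s*w)
        = (w*r - r*w) * (w*(t*s) - (t*s)*w) - ((w*r - r*w) * (w*t - t*w)) * s := by
      noncomm_ring
    rw [expand, key1 w hw r (t*s), key1 w hw r t]
    simp
  -- central : if w ∈ U and σ w = w or σ w = -w, then w commutes with everything
  have central : ∀ w ∈ U, (σ w = w ∨ σ w = -w) → ∀ r : R, w*r - r*w = 0 := by
    intro w hw hε r
    -- σ ([w,r]) = ε * [w, σ r]
    have hform : σ (w*r - r*w) = (w*(σ r) - (σ r)*w) ∨
                 σ (w*r - r*w) = -(w*(σ r) - (σ r)*w) := by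
      have h : σ (w*r - r*w) = σ r * σ w - σ w * σ r := by
        have := hσadd (w*r) (-(r*w))
        rw [hσneg, hσmul, hσmul] at this
        rw [sub_eq_add_neg, this]
        noncomm_ring
      rcases hε with hε | hε
      · right; rw [h, hε]; noncomm_ring
      · left; rw [h, hε]; noncomm_ring
    have c1 : ∀ t : R, σ (w*r - r*w) * t * σ (w*r - r*w) = 0 := by
      intro t
      rcases hform with hf | hf <;> rw [hf]
      · exact key2 w hw (σ r) t (σ r)
      · simp only [neg_mul, mul_neg, neg_neg]
        exact key2 w hw (σ r) t (σ r)
    have c2 : ∀ t : R, σ (w*r - r*w) * t * σ (σ (w*r - r*w)) = 0 := by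
      intro t
      rw [hσinv]
      rcases hform with hf | hf <;> rw [hf]
      · exact key2 w hw (σ r) t r
      · simp only [neg_mul, mul_neg, neg_neg, neg_eq_zero]
        exact key2 w hw (σ r) t r
    have hz : σ (w*r - r*w) = 0 := by
      rcases hsp _ _ c1 c2 with h | h
      · exact h
      · exact h
    have := congrArg σ hz
    rwa [hσinv, hσ0] at this
  -- now conclude for arbitrary u ∈ U
  intro u hu r
  have h1 : (u + σ u) * r - r * (u + σ u) = 0 := by
    apply central (u + σ u) (U.add_mem hu (hσU u hu))
    left
    rw [hσadd, hσinv]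
    abel
  have h2 : (u - σ u) * r - r * (u - σ u) = 0 := by
    apply central (u - σ u) (U.sub_mem hu (hσU u hu))
    right
    rw [sub_eq_add_neg, hσadd, hσneg, hσinv]
    abel
  have h3 : (u*r - r*u) + (u*r - r*u) = 0 := by
    have : (u*r - r*u) + (u*r - r*u)
        = ((u + σ u) * r - r * (u + σ u)) + ((u - σ u) * r - r * (u - σ u)) := by
      noncomm_ring
    rw [this, h1, h2, add_zero]
  exact sub_eq_zero.mp (htor _ h3)
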